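/- Define the Poisson tensor on functions of (G, λ₁,…,λ_n) (G an invertible n×n matrix, λ's distinct) by the relations {G_{bj}, G_{cℓ}} = G_{bℓ}G_{cj}/(λ_j - λ_ℓ) for j ≠ ℓ, {G_{bj}, G_{cj}} = 0, {G_{bk}, λ_ℓ} = -G_{bk}δ_{ℓk}, and {λ_j, λ_k} = 0. Then the matrix entries of A = G L G⁻¹ (with L = diag(λ₁,…,λ_n)) satisfy the Kirillov–Kostant bracket: {A_{ab}, A_{cd}} = A_{ad}δ_{bc} - A_{cb}δ_{ad}. -/

import Mathlib

open Matrix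

/-- The quadratic Poisson bracket
`{G_{bj}, G_{cℓ}} = G_{bℓ}G_{cj}/(λ_j - λ_ℓ)` (for `j ≠ ℓ`),
`{G_{bj}, G_{cj}} = 0`, `{G_{bk}, λ_ℓ} = -G_{bk}δ_{ℓk}`, `{λ_j, λ_k} = 0`
on the (commutative) algebra of functions of `(G, λ)` implies that
`A = G L G⁻¹` with `L = diag(λ₁,…,λ_n)` satisfies the Kirillov–Kostant bracket
`{A_{ab}, A_{cd}} = A_{ad}δ_{bc} - A_{cb}δ_{ad}`. -/
theorem quadratic_bracket_implies_KirillovKostant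
    {R : Type*} [CommRing R] (n : ℕ)
    (P : R → R → R)
    -- `P` is an antisymmetric biderivation:
    (hskew : ∀ a b, P a b = -P b a)
    (hadd : ∀ a b c, P a (b + c) = P a b + P a c)
    (hleib : ∀ a b c, P a (b * c) = P a b * c + b * P a c)
    (G Ginv : Matrix (Fin n) (Fin n) R) (lam : Fin n → R)
    (hGinv₁ : G * Ginv = 1) (hGinv₂ : Ginv * G = 1)
    (hunit : ∀ j ℓ : Fin n, j ≠ ℓ → IsUnit (lam j - lam ℓ))
    -- bracket relations on the generators:
    (hGG : ∀ (b c j ℓ : Fin n), j ≠ ℓ →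
      (lam j - lam ℓ) * P (G b j) (G c ℓ) = G b ℓ * G c j)
    (hGGdiag : ∀ (b c j : Fin n), P (G b j) (G c j) = 0)
    (hGlam : ∀ (b k ℓ : Fin n), P (G b k) (lam ℓ) = -(if ℓ = k then G b k else 0))
    (hll : ∀ j k : Fin n, P (lam j) (lam k) = 0)
    (A : Matrix (Fin n) (Fin n) R) (hA : A = G * Matrix.diagonal lam * Ginv) :
    ∀ a b c d : Fin n,
      P (A a b) (A c d) =
        A a d * (if b = c then 1 else 0) - A c b * (if a = d then 1 else 0) := by
  classical
  set H := Ginv with hHdef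
  -- derived bilinearity
  have hleib' : ∀ x y z, P (y * z) x = P y x * z + y * P z x := by
    intro x y z; rw [hskew, hleib, hskew x y, hskew x z]; ring
  have hP0 : ∀ x, P x 0 = 0 := by
    intro x
    have h := hadd x 0 0
    rw [add_zero] at h
    exact (left_eq_add.mp h)
  have hP1 : ∀ x, P x 1 = 0 := by
    intro x
    have h := hleib x 1 1
    simp only [mul_one, one_mul] at h
    exact (left_eq_add.mp h)
  have hPif : ∀ x (p : Prop) [Decidable p], P x (if p then (1:R) else 0) = 0 := by
    intro x p _; split <;> simp [hP0, hP1]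
  have hPsum : ∀ x (f : Fin n → R), P x (∑ i, f i) = ∑ i, P x (f i) := by
    intro x f
    exact map_sum (AddMonoidHom.mk' (P x) (hadd x)) f Finset.univ
  have hPsum' : ∀ x (f : Fin n → R), P (∑ i, f i) x = ∑ i, P (f i) x := by
    intro x f
    rw [hskew, hPsum, ← Finset.sum_neg_distrib]
    exact Finset.sum_congr rfl fun i _ => (hskew (f i) x).symm
  -- matrix entry identities
  have hGH1 : ∀ i j, (∑ k, G i k * H k j) = (if i = j then (1:R) else 0) := by
    intro i j
    have := congrFun (congrFun hGinv₁ i) j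
    simpa [Matrix.mul_apply, Matrix.one_apply] using this
  have hHG1 : ∀ i j, (∑ k, H i k * G k j) = (if i = j then (1:R) else 0) := by
    intro i j
    have := congrFun (congrFun hGinv₂ i) j
    simpa [Matrix.mul_apply, Matrix.one_apply] using this
  have hAe : ∀ x y, A x y = ∑ i, G x i * lam i * H i y := by
    intro x y
    subst hA
    rw [Matrix.mul_assoc]
    simp [Matrix.mul_apply, Matrix.diagonal_apply, ite_mul, mul_assoc]
  -- inverse of eigenvalue differences
  set c : Fin n → Fin n → R := fun i j => Ring.inverse (lam i - lam j) with hcdef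
  have hc : ∀ i j, i ≠ j → c i j * (lam i - lam j) = 1 := by
    intro i j h; exact Ring.inverse_mul_cancel _ (hunit i j h)
  have hPGG : ∀ a' c' i j, P (G a' i) (G c' j) =
      if i = j then 0 else c i j * (G a' j * G c' i) := by
    intro a' c' i j
    split
    · next h => subst h; exact hGGdiag a' c' i
    · next h =>
      have h1 := hGG a' c' i j h
      calc P (G a' i) (G c' j) = c i j * (lam i - lam j) * P (G a' i) (G c' j) := by
            rw [hc i j h, one_mul]
        _ = c i j * (G a' j * G c' i) := by rw [mul_assoc, h1]
  have hPlamG : ∀ i c' j, P (lam i) (G c' j) = if i = j then G c' j else 0 := by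
    intro i c' j
    rw [hskew, hGlam, neg_neg]
  -- the general formula for P x (H j d)
  have PH : ∀ (x : R) (j d' : Fin n),
      P x (H j d') = -∑ p, ∑ q, H j p * P x (G p q) * H q d' := by
    intro x j d'
    have key : ∀ p, (∑ i, G p i * P x (H i d')) = -∑ i, P x (G p i) * H i d' := by
      intro p
      have h0 : P x (∑ q, G p q * H q d') = 0 := by
        rw [hGH1 p d']; exact hPif x _
      rw [hPsum] at h0
      have h1 : ∑ q, (P x (G p q) * H q d' + G p q * P x (H q d')) = 0 := by
        refine Eq.trans (Finset.sum_congr rfl fun q _ => ?_) h0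
        rw [hleib]
      rw [Finset.sum_add_distrib] at h1
      linear_combination h1
    calc P x (H j d') = ∑ i, (if j = i then (1:R) else 0) * P x (H i d') := by
          simp [ite_mul]
      _ = ∑ i, (∑ p, H j p * G p i) * P x (H i d') := by
          refine Finset.sum_congr rfl fun i _ => ?_
          rw [hHG1 j i]
      _ = ∑ i, ∑ p, H j p * (G p i * P x (H i d')) := by
          refine Finset.sum_congr rfl fun i _ => ?_
          rw [Finset.sum_mul]
          refine Finset.sum_congr rfl fun p _ => ?_
          ring
      _ = ∑ p, ∑ i, H j p * (G p i * P x (H i d')) := Finset.sum_comm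
      _ = ∑ p, H j p * (∑ i, G p i * P x (H i d')) := by
          refine Finset.sum_congr rfl fun p _ => ?_
          rw [Finset.mul_sum]
      _ = ∑ p, H j p * (-∑ i, P x (G p i) * H i d') := by
          refine Finset.sum_congr rfl fun p _ => ?_
          rw [key p]
      _ = -∑ p, ∑ q, H j p * P x (G p q) * H q d' := by
          rw [← Finset.sum_neg_distrib]
          refine Finset.sum_congr rfl fun p _ => ?_
          rw [mul_neg, Finset.mul_sum]
          congr 1
          refine Finset.sum_congr rfl fun q _ => ?_
          ring
  have hPlamH : ∀ i j d', P (lam i) (H j d') = -(if i = j then H i d' else 0) := by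
    intro i j d'
    rw [PH]
    congr 1
    calc ∑ p, ∑ q, H j p * P (lam i) (G p q) * H q d'
        = ∑ p, ∑ q, (if i = q then H j p * G p q * H q d' else 0) := by
          refine Finset.sum_congr rfl fun p _ => Finset.sum_congr rfl fun q _ => ?_
          rw [hPlamG]
          by_cases h : i = q <;> simp only [h, eq_self_iff_true, if_true, if_false] <;> ring
      _ = ∑ p, H j p * G p i * H i d' := by
          refine Finset.sum_congr rfl fun p _ => ?_
          simp
      _ = (∑ p, H j p * G p i) * H i d' := by rw [Finset.sum_mul]
      _ = (if j = i then 1 else 0) * H i d' := by rw [hHG1]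
      _ = (if i = j then H i d' else 0) := by
          by_cases h : i = j
          · subst h; simp
          · rw [if_neg h, if_neg fun hji => h hji.symm, zero_mul]
  have hPGH : ∀ a' i j d', P (G a' i) (H j d') =
      -(if j = i then ∑ q, (if i = q then 0 else c i q * (G a' q * H q d')) else 0) := by
    intro a' i j d'
    rw [PH]
    congr 1
    calc ∑ p, ∑ q, H j p * P (G a' i) (G p q) * H q d'
        = ∑ q, ∑ p, (if i = q then 0 else H j p * G p i * (c i q * (G a' q * H q d'))) := by
          rw [Finset.sum_comm]
          refine Finset.sum_congr rfl fun q _ => Finset.sum_congr rfl fun p _ => ?_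
          rw [hPGG]
          by_cases h : i = q <;> simp only [h, eq_self_iff_true, if_true, if_false] <;> ring
      _ = ∑ q, (if i = q then 0 else (∑ p, H j p * G p i) * (c i q * (G a' q * H q d'))) := by
          refine Finset.sum_congr rfl fun q _ => ?_
          by_cases h : i = q
          · simp [h]
          · simp only [h, if_false]
            rw [Finset.sum_mul]
      _ = ∑ q, (if i = q then 0 else (if j = i then 1 else 0) * (c i q * (G a' q * H q d'))) := by
          refine Finset.sum_congr rfl fun q _ => ?_
          rw [hHG1]
      _ = if j = i then ∑ q, (if i = q then 0 else c i q * (G a' q * H q d')) else 0 := by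
          by_cases h : j = i <;> simp only [h, eq_self_iff_true, if_true, if_false, one_mul, zero_mul]
          simp
  have hPHH : ∀ i b' j d', P (H i b') (H j d') =
      -(if i = j then 0 else c i j * (H i d' * H j b')) := by
    intro i b' j d'
    rw [PH]
    congr 1
    calc ∑ p, ∑ q, H j p * P (H i b') (G p q) * H q d'
        = ∑ p, ∑ q, (if i = q then
            H j p * (∑ r, (if q = r then 0 else c q r * (G p r * H r b'))) * H q d'
            else 0) := by
          refine Finset.sum_congr rfl fun p _ => Finset.sum_congr rfl fun q _ => ?_
          rw [hskew, hPGH, neg_neg]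
          by_cases h : i = q <;> simp only [h, eq_self_iff_true, if_true, if_false] <;> ring
      _ = ∑ p, H j p * (∑ r, (if i = r then 0 else c i r * (G p r * H r b'))) * H i d' := by
          refine Finset.sum_congr rfl fun p _ => ?_
          simp
      _ = ∑ p, ∑ r, (if i = r then 0 else H j p * G p r * (c i r * (H r b' * H i d'))) := by
          refine Finset.sum_congr rfl fun p _ => ?_
          rw [mul_comm (H j p) _, Finset.sum_mul, Finset.sum_mul]
          refine Finset.sum_congr rfl fun r _ => ?_
          by_cases h : i = r <;> simp only [h, eq_self_iff_true, if_true, if_false] <;> ring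
      _ = ∑ r, (if i = r then 0 else (∑ p, H j p * G p r) * (c i r * (H r b' * H i d'))) := by
          rw [Finset.sum_comm]
          refine Finset.sum_congr rfl fun r _ => ?_
          by_cases h : i = r <;> simp only [h, eq_self_iff_true, if_true, if_false]
          · simp
          · rw [Finset.sum_mul]
      _ = ∑ r, (if j = r then (if i = r then 0 else c i r * (H r b' * H i d')) else 0) := by
          refine Finset.sum_congr rfl fun r _ => ?_
          rw [hHG1]
          by_cases h1 : j = r <;> by_cases h2 : i = r <;>
            simp only [h1, h2, eq_self_iff_true, if_true, if_false, one_mul, zero_mul, mul_zero] <;> ring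
      _ = (if i = j then 0 else c i j * (H i d' * H j b')) := by
          simp only [Finset.sum_ite_eq, Finset.mem_univ, if_true]
          by_cases h : i = j <;> simp only [h, eq_self_iff_true, if_true, if_false]
          ring
  have hPHG : ∀ i b' c' j, P (H i b') (G c' j) =
      (if i = j then ∑ q, (if j = q then 0 else c j q * (G c' q * H q b')) else 0) := by
    intro i b' c' j
    rw [hskew, hPGH, neg_neg]
  have hPHlam : ∀ i b' j, P (H i b') (lam j) = (if j = i then H j b' else 0) := by
    intro i b' j
    rw [hskew, hPlamH, neg_neg]
  have expand : ∀ x1 x2 x3 y1 y2 y3 : R, P (x1*x2*x3) (y1*y2*y3) =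
      P x1 y1 * (x2*x3*y2*y3) + P x1 y2 * (x2*x3*y1*y3) + P x1 y3 * (x2*x3*y1*y2)
    + P x2 y1 * (x1*x3*y2*y3) + P x2 y2 * (x1*x3*y1*y3) + P x2 y3 * (x1*x3*y1*y2)
    + P x3 y1 * (x1*x2*y2*y3) + P x3 y2 * (x1*x2*y1*y3) + P x3 y3 * (x1*x2*y1*y2) := by
    intros x1 x2 x3 y1 y2 y3
    simp only [hleib, hleib']
    ring
  have key : ∀ a b c' d : Fin n, ∀ i j : Fin n,
      P (G a i * lam i * H i b) (G c' j * lam j * H j d)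
        = (if i = j then 0 else
             c i j * (G a j * G c' i * (lam i * H i b * lam j * H j d))
             - c i j * (H i d * H j b * (G a i * lam i * G c' j * lam j)))
          + (if i = j then
              ((∑ q, (if j = q then 0 else c j q * (G c' q * H q b))) *
                  (G a i * lam i * lam j * H j d)
               - (∑ q, (if i = q then 0 else c i q * (G a q * H q d))) *
                  (lam i * H i b * G c' j * lam j))
             else 0) := by
    intro a b c' d i j
    rw [expand, hPGG, hGlam, hPGH, hPlamG, hll, hPlamH, hPHG, hPHlam, hPHH]
    by_cases h : i = j
    · subst h
      simp only [eq_self_iff_true, if_true]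
      ring
    · have h' : ¬ j = i := fun e => h e.symm
      simp only [h, h', if_false]
      ring
  intro a b c' d
  calc P (A a b) (A c' d)
      = ∑ i, ∑ j, P (G a i * lam i * H i b) (G c' j * lam j * H j d) := by
        rw [hAe a b, hAe c' d, hPsum']
        refine Finset.sum_congr rfl fun i _ => ?_
        rw [hPsum]
    _ = (∑ i, ∑ j, (if i = j then 0 else
             c i j * (G a j * G c' i * (lam i * H i b * lam j * H j d))
             - c i j * (H i d * H j b * (G a i * lam i * G c' j * lam j))))
        + (∑ i, ∑ j, (if i = j then
              ((∑ q, (if j = q then 0 else c j q * (G c' q * H q b))) *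
                  (G a i * lam i * lam j * H j d)
               - (∑ q, (if i = q then 0 else c i q * (G a q * H q d))) *
                  (lam i * H i b * G c' j * lam j))
             else 0)) := by
        rw [← Finset.sum_add_distrib]
        refine Finset.sum_congr rfl fun i _ => ?_
        rw [← Finset.sum_add_distrib]
        exact Finset.sum_congr rfl fun j _ => key a b c' d i j
    _ = (∑ i, ∑ j, (if i = j then 0 else
             c i j * (G a j * G c' i * (lam i * H i b * lam j * H j d))
             - c i j * (H i d * H j b * (G a i * lam i * G c' j * lam j))))
        + (∑ i, ∑ j, (if i = j then 0 else
             c i j * (G c' j * H j b * (G a i * lam i * lam i * H i d))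
             - c i j * (G a j * H j d * (lam i * H i b * G c' i * lam i)))) := by
        congr 1
        refine Finset.sum_congr rfl fun i _ => ?_
        rw [Finset.sum_ite_eq Finset.univ i _]
        simp only [Finset.mem_univ, if_true]
        rw [Finset.sum_mul, Finset.sum_mul, ← Finset.sum_sub_distrib]
        refine Finset.sum_congr rfl fun q _ => ?_
        by_cases h : i = q
        · simp [h]
        · simp only [h, if_false]
          ring
    _ = ∑ i, ∑ j, (if i = j then 0 else
           lam i * (G a i * H i d * (G c' j * H j b))
           - lam i * (G c' i * H i b * (G a j * H j d))) := by
        rw [← Finset.sum_add_distrib]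
        refine Finset.sum_congr rfl fun i _ => ?_
        rw [← Finset.sum_add_distrib]
        refine Finset.sum_congr rfl fun j _ => ?_
        by_cases h : i = j
        · simp [h]
        · simp only [h, if_false]
          linear_combination (lam i * (G a i * H i d * (G c' j * H j b))
            - lam i * (G c' i * H i b * (G a j * H j d))) * hc i j h
    _ = ∑ i, ∑ j, (lam i * (G a i * H i d * (G c' j * H j b))
           - lam i * (G c' i * H i b * (G a j * H j d))) := by
        refine Finset.sum_congr rfl fun i _ => Finset.sum_congr rfl fun j _ => ?_
        by_cases h : i = j
        · subst h; simp only [eq_self_iff_true, if_true]; ring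
        · simp only [h, if_false]
    _ = (∑ i, G a i * lam i * H i d) * (∑ j, G c' j * H j b)
        - (∑ i, G c' i * lam i * H i b) * (∑ j, G a j * H j d) := by
        rw [Finset.sum_mul, Finset.sum_mul, ← Finset.sum_sub_distrib]
        refine Finset.sum_congr rfl fun i _ => ?_
        rw [Finset.mul_sum, Finset.mul_sum, ← Finset.sum_sub_distrib]
        refine Finset.sum_congr rfl fun j _ => ?_
        ring
    _ = A a d * (if b = c' then 1 else 0) - A c' b * (if a = d then 1 else 0) := by
        rw [hGH1 c' b, hGH1 a d, ← hAe a d, ← hAe c' b]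
        by_cases h : b = c'
        · rw [if_pos h, if_pos h.symm]
        · rw [if_neg h, if_neg fun e => h e.symm]
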